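/- Let M be a model with borders on n variables, let φ be a (∧,→)-formula over the n variables, and let x ∈ M. Then M, x ⊨ φ if and only if for every separated point y with x ≤ y one has M^s, y ⊨ φ, where M^s, y ⊨ φ denotes satisfaction in the submodel of separated points. -/

import Mathlib

/-- `(∧,→)`-formulas over `n` propositional variables. -/
inductive MeetImpForm (n : ℕ) : Type
  | var (i : Fin n) : MeetImpForm n
  | and (φ ψ : MeetImpForm n) : MeetImpForm n
  | imp (φ ψ : MeetImpForm n) : MeetImpForm n

/-- Kripke satisfaction of a `(∧,→)`-formula in a model given by a poset `M` with
colouring `c : M → Fin n → Bool`. -/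
def MeetImpSat {n : ℕ} {M : Type*} [PartialOrder M] (c : M → Fin n → Bool) :
    MeetImpForm n → M → Prop
  | .var i, x => c x i = true
  | .and φ ψ, x => MeetImpSat c φ x ∧ MeetImpSat c ψ x
  | .imp φ ψ, x => ∀ y : M, x ≤ y → MeetImpSat c φ y → MeetImpSat c ψ y

/-- A point `x` of a model is separated if it is a `p_i`-border point for some
variable `p_i`. -/
def SeparatedPt {n : ℕ} {M : Type*} [PartialOrder M] (c : M → Fin n → Bool) (x : M) : Prop :=
  ∃ i : Fin n, c x i = false ∧ ∀ z : M, x < z → c z i = true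

theorem meetImpSat_mono {n : ℕ} {M : Type*} [PartialOrder M] (c : M → Fin n → Bool)
    (hc : Monotone c) (φ : MeetImpForm n) :
    ∀ x y : M, x ≤ y → MeetImpSat c φ x → MeetImpSat c φ y := by
  induction φ with
  | var i =>
    intro x y hxy h
    have := hc hxy i
    rw [h] at this
    simpa [MeetImpSat] using top_le_iff.mp this
  | and φ ψ ihφ ihψ =>
    intro x y hxy h
    exact ⟨ihφ x y hxy h.1, ihψ x y hxy h.2⟩
  | imp φ ψ _ _ =>
    intro x y hxy h z hz hzφ
    exact h z (le_trans hxy hz) hzφ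

/-- In a model with borders `M`, a point `x` satisfies a `(∧,→)`-formula `φ` if and
only if every separated point above `x` satisfies `φ` in the submodel `M^s` of
separated points (with the restricted order and colouring). -/
theorem meetImpSat_iff_all_separated_above
    {n : ℕ} {M : Type*} [PartialOrder M] (c : M → Fin n → Bool) (hc : Monotone c)
    (hborders : ∀ (x : M) (i : Fin n), c x i = false →
      ∃ u : M, x ≤ u ∧ c u i = false ∧ ∀ z : M, u < z → c z i = true)
    (φ : MeetImpForm n) (x : M) :
    MeetImpSat c φ x ↔
      ∀ y : {z : M // SeparatedPt c z}, x ≤ (y : M) →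
        MeetImpSat (fun z : {z : M // SeparatedPt c z} => c (z : M)) φ y := by
  induction φ generalizing x with
  | var i =>
    constructor
    · intro h y hy
      have := hc hy i
      rw [h] at this
      simpa [MeetImpSat] using top_le_iff.mp this
    · intro h
      by_contra hx
      have hx' : c x i = false := by
        cases hxi : c x i
        · rfl
        · exact absurd hxi hx
      obtain ⟨u, hxu, hu, hub⟩ := hborders x i hx'
      have := h ⟨u, i, hu, hub⟩ hxu
      simp [MeetImpSat, hu] at this
  | and φ ψ ihφ ihψ =>
    simp only [MeetImpSat, ihφ, ihψ]
    constructor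
    · rintro ⟨h1, h2⟩ y hy; exact ⟨h1 y hy, h2 y hy⟩
    · intro h; exact ⟨fun y hy => (h y hy).1, fun y hy => (h y hy).2⟩
  | imp φ ψ ihφ ihψ =>
    constructor
    · intro h y hy z hz hzφ
      have hzM : MeetImpSat c φ (z : M) := by
        rw [ihφ]
        intro w hw
        exact meetImpSat_mono (fun z : {z : M // SeparatedPt c z} => c (z : M))
          (fun _ _ hab => hc hab) φ z w hw hzφ
      have := h (z : M) (le_trans hy hz) hzM
      exact ((ihψ (z : M)).mp this) z le_rfl
    · intro h z hz hzφ
      rw [ihψ]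
      intro w hw
      have hwφ : MeetImpSat (fun z : {z : M // SeparatedPt c z} => c (z : M)) φ w :=
        (ihφ z).mp hzφ w hw
      exact h w (le_trans hz hw) w le_rfl hwφ
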